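/- Under the hypotheses of the previous statement, if S is any matrix whose first and last rows annihilate the constant vector (i.e. e₀ᵀ S 𝟏 = 0 and e_Nᵀ S 𝟏 = 0), then the corner entries e₀ᵀ S(A_S+δE₀)⁻¹Sᵀ e₀, e_Nᵀ S(A_S+δE₀)⁻¹Sᵀ e_N, and e₀ᵀ S(A_S+δE₀)⁻¹Sᵀ e_N are independent of δ for δ ≠ 0. -/

import Mathlib

open Matrix

section Aux
variable {N : ℕ}

private lemma e0_vecMulVec :
    (Matrix.single (0 : Fin (N+1)) 0 (1:ℝ)) =
      vecMulVec (Pi.single (0 : Fin (N+1)) (1:ℝ)) (Pi.single 0 1) := by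
  ext i j
  simp [Matrix.single, vecMulVec_apply, Pi.single_apply]
  by_cases hi : i = 0 <;> by_cases hj : j = 0 <;> simp [hi, hj] <;> aesop

private lemma ker_zero (AS : Matrix (Fin (N+1)) (Fin (N+1)) ℝ) (hsym : AS.IsSymm)
    (hrow : AS *ᵥ (fun _ => (1:ℝ)) = 0)
    (Abar : Matrix (Fin N) (Fin N) ℝ)
    (hAbar : Abar = AS.submatrix Fin.succ Fin.succ)
    (hinv : IsUnit Abar.det) (δ : ℝ) (hδ : δ ≠ 0)
    (x : Fin (N+1) → ℝ)
    (hx : (AS + δ • Matrix.single 0 0 1) *ᵥ x = 0) : x = 0 := by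
  have hcol : (fun _ => (1:ℝ)) ᵥ* AS = 0 := by
    have := hsym.eq
    calc (fun _ => (1:ℝ)) ᵥ* AS = ASᵀ *ᵥ (fun _ => (1:ℝ)) := (mulVec_transpose AS _).symm
    _ = AS *ᵥ (fun _ => (1:ℝ)) := by rw [hsym.eq]
    _ = 0 := hrow
  -- x 0 = 0
  have hx0 : x 0 = 0 := by
    have h1 : (fun _ => (1:ℝ)) ⬝ᵥ ((AS + δ • Matrix.single 0 0 1) *ᵥ x) = 0 := by
      rw [hx]; simp
    rw [dotProduct_mulVec, vecMul_add, hcol] at h1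
    have h2 : (fun _ => (1:ℝ)) ᵥ* (δ • Matrix.single (0:Fin (N+1)) 0 (1:ℝ))
        = δ • (Pi.single 0 1 : Fin (N+1) → ℝ) := by
      ext j
      simp only [vecMul, dotProduct, Matrix.single, of_apply, Matrix.smul_apply, smul_eq_mul,
        mul_ite, mul_one, mul_zero, one_mul, Pi.smul_apply, Pi.single_apply]
      by_cases hj : j = 0
      · subst hj; simp
      · have : ¬ ((0:Fin (N+1)) = j) := fun h => hj h.symm
        simp [hj, this]
    rw [h2] at h1
    simp [dotProduct, Pi.single_apply, Finset.mul_sum] at h1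
    rcases h1 with h | h
    · exact absurd h hδ
    · exact h
  -- AS *ᵥ x = 0
  have hASx : AS *ᵥ x = 0 := by
    have hE : (Matrix.single (0:Fin (N+1)) 0 (1:ℝ)) *ᵥ x = 0 := by
      ext i
      simp only [mulVec, dotProduct, Pi.zero_apply, Matrix.single, of_apply]
      apply Finset.sum_eq_zero
      intro j _
      by_cases h : (0:Fin (N+1)) = i ∧ (0:Fin (N+1)) = j
      · rw [if_pos h, ← h.2, hx0, one_mul]
      · rw [if_neg h, zero_mul]
    have := hx
    rw [add_mulVec, smul_mulVec, hE, smul_zero, add_zero] at this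
    exact this
  -- tail
  have htail : Abar *ᵥ (fun k => x k.succ) = 0 := by
    ext i
    have h := congrFun hASx i.succ
    simp only [mulVec, dotProduct, Pi.zero_apply] at h ⊢
    rw [Fin.sum_univ_succ, hx0, mul_zero, zero_add] at h
    simpa [hAbar, submatrix_apply] using h
  have hzero : (fun k : Fin N => x k.succ) = 0 := by
    have := congrArg (fun v : Fin N → ℝ => Abar⁻¹ *ᵥ v) htail
    simpa [mulVec_mulVec, nonsing_inv_mul _ hinv] using this
  ext j
  refine Fin.cases ?_ ?_ j
  · exact hx0
  · intro k; exact congrFun hzero k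


private lemma det_unit (AS : Matrix (Fin (N+1)) (Fin (N+1)) ℝ) (hsym : AS.IsSymm)
    (hrow : AS *ᵥ (fun _ => (1:ℝ)) = 0)
    (Abar : Matrix (Fin N) (Fin N) ℝ)
    (hAbar : Abar = AS.submatrix Fin.succ Fin.succ)
    (hinv : IsUnit Abar.det) (δ : ℝ) (hδ : δ ≠ 0) :
    IsUnit (AS + δ • Matrix.single 0 0 1).det := by
  rw [isUnit_iff_ne_zero]
  intro hdet
  obtain ⟨v, hv, hv0⟩ := (Matrix.exists_mulVec_eq_zero_iff).mpr hdet
  exact hv (ker_zero AS hsym hrow Abar hAbar hinv δ hδ v hv0)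

private lemma mul_vecMulVec' (A : Matrix (Fin (N+1)) (Fin (N+1)) ℝ) (u v : Fin (N+1) → ℝ) :
    A * vecMulVec u v = vecMulVec (A *ᵥ u) v := by
  ext i j
  simp [mul_apply, vecMulVec_apply, mulVec, dotProduct, Finset.sum_mul, mul_assoc]

private lemma vecMulVec_mul' (A : Matrix (Fin (N+1)) (Fin (N+1)) ℝ) (u v : Fin (N+1) → ℝ) :
    vecMulVec u v * A = vecMulVec u (v ᵥ* A) := by
  ext i j
  simp [mul_apply, vecMulVec_apply, vecMul, dotProduct, Finset.mul_sum, mul_assoc]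

private lemma Msymm (AS : Matrix (Fin (N+1)) (Fin (N+1)) ℝ) (hsym : AS.IsSymm) (δ : ℝ) :
    (AS + δ • Matrix.single (0:Fin (N+1)) 0 (1:ℝ))ᵀ
      = AS + δ • Matrix.single 0 0 1 := by
  ext i j
  have hA : AS j i = AS i j := congrFun (congrFun hsym.eq i) j
  simp only [transpose_apply, Matrix.add_apply, Matrix.smul_apply, smul_eq_mul, Matrix.single,
    of_apply, hA]
  congr 1
  by_cases hi : (0:Fin (N+1)) = i <;> by_cases hj : (0:Fin (N+1)) = j <;>
    simp [hi, hj]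

private lemma inv_single (AS : Matrix (Fin (N+1)) (Fin (N+1)) ℝ) (hsym : AS.IsSymm)
    (hrow : AS *ᵥ (fun _ => (1:ℝ)) = 0)
    (Abar : Matrix (Fin N) (Fin N) ℝ)
    (hAbar : Abar = AS.submatrix Fin.succ Fin.succ)
    (hinv : IsUnit Abar.det) (δ : ℝ) (hδ : δ ≠ 0) :
    (AS + δ • Matrix.single 0 0 1)⁻¹ *ᵥ Pi.single (0:Fin (N+1)) (1:ℝ)
      = δ⁻¹ • ((fun _ => (1:ℝ)) : Fin (N+1) → ℝ) := by
  set M := AS + δ • Matrix.single (0:Fin (N+1)) 0 (1:ℝ) with hM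
  have hMone : M *ᵥ (fun _ => (1:ℝ)) = δ • (Pi.single 0 1 : Fin (N+1) → ℝ) := by
    rw [hM, add_mulVec, hrow, zero_add, smul_mulVec]
    congr 1
    ext i
    simp only [mulVec, dotProduct, Matrix.single, of_apply, Pi.single_apply]
    by_cases hi : (0:Fin (N+1)) = i
    · subst hi; simp
    · have h0 : ¬(i = 0) := fun h => hi h.symm
      simp [hi, h0]
  have hMd : IsUnit M.det := det_unit AS hsym hrow Abar hAbar hinv δ hδ
  have h1 : M⁻¹ *ᵥ (M *ᵥ (fun _ => (1:ℝ))) = fun _ => (1:ℝ) := by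
    rw [mulVec_mulVec, nonsing_inv_mul M hMd, one_mulVec]
  rw [hMone, mulVec_smul] at h1
  calc M⁻¹ *ᵥ Pi.single 0 1 = δ⁻¹ • (δ • (M⁻¹ *ᵥ Pi.single 0 1)) := by
        rw [smul_smul, inv_mul_cancel₀ hδ, one_smul]
    _ = δ⁻¹ • ((fun _ => (1:ℝ)) : Fin (N+1) → ℝ) := by rw [h1]

private lemma key_diff (AS : Matrix (Fin (N+1)) (Fin (N+1)) ℝ) (hsym : AS.IsSymm)
    (hrow : AS *ᵥ (fun _ => (1:ℝ)) = 0)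
    (Abar : Matrix (Fin N) (Fin N) ℝ)
    (hAbar : Abar = AS.submatrix Fin.succ Fin.succ)
    (hinv : IsUnit Abar.det) (δ δ' : ℝ) (hδ : δ ≠ 0) (hδ' : δ' ≠ 0) :
    (AS + δ • Matrix.single 0 0 1)⁻¹ - (AS + δ' • Matrix.single 0 0 1)⁻¹
      = ((δ' - δ) * (δ⁻¹ * δ'⁻¹)) • vecMulVec ((fun _ => (1:ℝ)) : Fin (N+1) → ℝ)
          ((fun _ => (1:ℝ)) : Fin (N+1) → ℝ) := by
  set M := AS + δ • Matrix.single (0:Fin (N+1)) 0 (1:ℝ) with hM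
  set M' := AS + δ' • Matrix.single (0:Fin (N+1)) 0 (1:ℝ) with hM'
  have hMd : IsUnit M.det := det_unit AS hsym hrow Abar hAbar hinv δ hδ
  have hMd' : IsUnit M'.det := det_unit AS hsym hrow Abar hAbar hinv δ' hδ'
  have hstep : M⁻¹ - M'⁻¹ = M⁻¹ * (M' - M) * M'⁻¹ := by
    rw [Matrix.mul_sub, Matrix.nonsing_inv_mul _ hMd, Matrix.sub_mul, Matrix.one_mul,
      Matrix.mul_nonsing_inv_cancel_right _ _ hMd']
  have hMM : M' - M
      = (δ' - δ) • vecMulVec (Pi.single (0:Fin (N+1)) (1:ℝ)) (Pi.single 0 1) := by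
    rw [hM', hM]
    ext i j
    simp only [Matrix.sub_apply, Matrix.add_apply, Matrix.smul_apply, smul_eq_mul, Matrix.single,
      of_apply, vecMulVec_apply, Pi.single_apply]
    by_cases hi : i = 0
    · by_cases hj : j = 0
      · subst hi; subst hj; simp
      · have h0 : ¬((0:Fin (N+1)) = j) := fun h => hj h.symm
        subst hi; simp [hj, h0]
    · have h0 : ¬((0:Fin (N+1)) = i) := fun h => hi h.symm
      by_cases hj : j = 0
      · subst hj; simp [hi, h0]
      · have h1 : ¬((0:Fin (N+1)) = j) := fun h => hj h.symm
        simp [hi, hj, h0, h1]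
  have hv : M⁻¹ *ᵥ Pi.single 0 1 = δ⁻¹ • ((fun _ => (1:ℝ)) : Fin (N+1) → ℝ) :=
    inv_single AS hsym hrow Abar hAbar hinv δ hδ
  have hv' : Pi.single 0 1 ᵥ* M'⁻¹ = δ'⁻¹ • ((fun _ => (1:ℝ)) : Fin (N+1) → ℝ) := by
    have h1 : (M'⁻¹)ᵀ = M'⁻¹ := by
      rw [transpose_nonsing_inv, Msymm AS hsym δ']
    rw [← mulVec_transpose, h1]
    exact inv_single AS hsym hrow Abar hAbar hinv δ' hδ'
  rw [hstep, hMM, Matrix.mul_smul, Matrix.smul_mul, mul_vecMulVec', vecMulVec_mul', hv, hv']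
  ext i j
  simp only [Matrix.smul_apply, vecMulVec_apply, Pi.smul_apply, smul_eq_mul]
  ring


end Aux

theorem stmt_11 {N : ℕ}
    (AS : Matrix (Fin (N+1)) (Fin (N+1)) ℝ) (hsym : AS.IsSymm)
    (hrow : AS *ᵥ (fun _ => (1:ℝ)) = 0)
    (Abar : Matrix (Fin N) (Fin N) ℝ)
    (hAbar : Abar = AS.submatrix Fin.succ Fin.succ)
    (hinv : IsUnit Abar.det)
    (E0 : Matrix (Fin (N+1)) (Fin (N+1)) ℝ) (hE0 : E0 = single 0 0 1)
    (S : Matrix (Fin (N+1)) (Fin (N+1)) ℝ)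
    (hS0 : (S *ᵥ fun _ => (1:ℝ)) 0 = 0)
    (hSN : (S *ᵥ fun _ => (1:ℝ)) (Fin.last N) = 0)
    (δ δ' : ℝ) (hδ : δ ≠ 0) (hδ' : δ' ≠ 0) :
    (S * (AS + δ • E0)⁻¹ * Sᵀ) 0 0 = (S * (AS + δ' • E0)⁻¹ * Sᵀ) 0 0
    ∧ (S * (AS + δ • E0)⁻¹ * Sᵀ) (Fin.last N) (Fin.last N)
        = (S * (AS + δ' • E0)⁻¹ * Sᵀ) (Fin.last N) (Fin.last N)
    ∧ (S * (AS + δ • E0)⁻¹ * Sᵀ) 0 (Fin.last N)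
        = (S * (AS + δ' • E0)⁻¹ * Sᵀ) 0 (Fin.last N) := by
  have hd := key_diff AS hsym hrow Abar hAbar hinv δ δ' hδ hδ'
  have hmain : S * (AS + δ • E0)⁻¹ * Sᵀ - S * (AS + δ' • E0)⁻¹ * Sᵀ
      = ((δ' - δ) * (δ⁻¹ * δ'⁻¹)) •
        vecMulVec (S *ᵥ fun _ => (1:ℝ)) (S *ᵥ fun _ => (1:ℝ)) := by
    calc S * (AS + δ • E0)⁻¹ * Sᵀ - S * (AS + δ' • E0)⁻¹ * Sᵀ
        = S * ((AS + δ • E0)⁻¹ - (AS + δ' • E0)⁻¹) * Sᵀ := by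
          rw [Matrix.mul_sub, Matrix.sub_mul]
      _ = ((δ' - δ) * (δ⁻¹ * δ'⁻¹)) •
            vecMulVec (S *ᵥ fun _ => (1:ℝ)) (S *ᵥ fun _ => (1:ℝ)) := by
          rw [hE0, hd, Matrix.mul_smul, Matrix.smul_mul, mul_vecMulVec', vecMulVec_mul',
            vecMul_transpose]
  have key : ∀ i j : Fin (N+1), (S *ᵥ fun _ => (1:ℝ)) i = 0 →
      (S * (AS + δ • E0)⁻¹ * Sᵀ) i j = (S * (AS + δ' • E0)⁻¹ * Sᵀ) i j := by
    intro i j hi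
    have h := congrFun (congrFun hmain i) j
    simpa [Matrix.sub_apply, Matrix.smul_apply, vecMulVec_apply, hi, sub_eq_zero] using h
  exact ⟨key 0 0 hS0, key _ _ hSN, key 0 _ hS0⟩
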